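/- (Spectral bound for QT codes) Let C be a λ-QT code of index ℓ with eigenvalue set Ω̄, and let P ⊆ Ω̄ be nonempty with d_P a defining set bound for the constacyclic code D_P with zero set P. Let V_P = ⋂_{β∈P} V_β be the common eigenspace and 𝔼_P = (V_P)^⊥ ∩ F_q^ℓ the eigencode. Then d(C) ≥ min{ d_P, d(𝔼_P) }. -/

import Mathlib

open Polynomial

/-- The `F_q[x]`-submodule of `F_q[x]^ℓ` spanned by the rows of `G`. -/
noncomputable def qtSpan {F : Type*} [Field F] {ℓ : ℕ}
    (G : Matrix (Fin ℓ) (Fin ℓ) (Polynomial F)) :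
    Submodule (Polynomial F) (Fin ℓ → Polynomial F) :=
  Submodule.span (Polynomial F) (Set.range fun i => G i)

/-- The `F`-linear map sending an `m × ℓ` array over `F` to the vector of
column polynomials `c_j(x) = ∑_k c_{k,j} x^k`. -/
noncomputable def toPolyL (F : Type*) [CommSemiring F] (m ℓ : ℕ) :
    (Fin m × Fin ℓ → F) →ₗ[F] (Fin ℓ → Polynomial F) where
  toFun c := fun j => ∑ k : Fin m, Polynomial.C (c (k, j)) * Polynomial.X ^ (k : ℕ)
  map_add' c c' := by
    funext j
    simp [map_add, add_mul, Finset.sum_add_distrib]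
  map_smul' a c := by
    funext j
    simp [Polynomial.smul_eq_C_mul, Finset.mul_sum, mul_assoc]

/-- Minimum Hamming distance of a set of vectors, `∞` if there is no nonzero element. -/
noncomputable def minDist {ι F : Type*} [Fintype ι] [Zero F] [DecidableEq F]
    (S : Set (ι → F)) : ℕ∞ :=
  sInf ((fun u => (hammingNorm u : ℕ∞)) '' {u ∈ S | u ≠ 0})

/-- The eigencode of a set `W ⊆ E^ℓ`: all `F`-vectors orthogonal to every element of `W`. -/
def eigencode {F E : Type*} [Field F] [Field E] [Algebra F E] {ℓ : ℕ}
    (W : Set (Fin ℓ → E)) : Set (Fin ℓ → F) :=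
  {u | ∀ v ∈ W, ∑ j, v j * algebraMap F E (u j) = 0}

/-- The common eigenspace of the eigenvalues in `P`. -/
def commonEig {F E : Type*} [Field F] [Field E] [Algebra F E] {ℓ : ℕ}
    (G : Matrix (Fin ℓ) (Fin ℓ) (Polynomial F)) (P : Finset E) : Set (Fin ℓ → E) :=
  {v | ∀ β ∈ P, (Matrix.of fun r c => Polynomial.aeval β (G r c)).mulVec v = 0}


lemma spanEval {F E : Type*} [Field F] [Field E] [Algebra F E] {ℓ : ℕ}
    (G : Matrix (Fin ℓ) (Fin ℓ) (Polynomial F)) (β : E)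
    (v : Fin ℓ → E) (hv : ∀ i, ∑ j, Polynomial.aeval β (G i j) * v j = 0)
    (p : Fin ℓ → Polynomial F) (hp : p ∈ qtSpan G) :
    ∑ j, Polynomial.aeval β (p j) * v j = 0 := by
  induction hp using Submodule.span_induction with
  | mem x hx => obtain ⟨i, rfl⟩ := hx; exact hv i
  | zero => simp
  | add x y _ _ hx hy =>
      simp only [Pi.add_apply, map_add, add_mul, Finset.sum_add_distrib, hx, hy, add_zero]
  | smul a x _ hx =>
      simp only [Pi.smul_apply, smul_eq_mul, map_mul, mul_assoc, ← Finset.mul_sum, hx, mul_zero]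

/-- Spectral bound for quasi-twisted codes. -/
theorem stmt14 {F E : Type*} [Field F] [Fintype F] [DecidableEq F]
    [Field E] [Algebra F E] [DecidableEq E]
    (m ℓ : ℕ) (hm : 0 < m) (hℓ : 0 < ℓ)
    (hco : Nat.Coprime m (Fintype.card F)) (lam : F) (hlam : lam ≠ 0)
    (G : Matrix (Fin ℓ) (Fin ℓ) (Polynomial F))
    (hupper : ∀ i j, j < i → G i j = 0)
    (hmonic : ∀ j, (G j j).Monic)
    (hdiag : ∀ j, G j j ∣ X ^ m - C lam)
    (hdeg : ∀ i j, i < j → (G i j).degree < (G j j).degree)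
    (hfull : ∀ i j, i ≠ j → G j j = X ^ m - C lam → G i j = 0)
    (hK : ∀ j : Fin ℓ, (fun j' => if j' = j then X ^ m - C lam else 0) ∈ qtSpan G)
    (P : Finset E) (hPne : P.Nonempty)
    (hP : ∀ β ∈ P, Polynomial.aeval β (∏ j, G j j) = 0)
    (dP : ℕ∞)
    (hdP : dP ≤ minDist {c : Fin m → E | ∀ β ∈ P, ∑ i : Fin m, c i * β ^ (i : ℕ) = 0}) :
    min dP (minDist (eigencode (F := F) (commonEig G P))) ≤
      minDist {c : Fin m × Fin ℓ → F | toPolyL F m ℓ c ∈ qtSpan G} := by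
  refine le_sInf ?_
  rintro b ⟨c, ⟨hcS, hc0⟩, rfl⟩
  by_cases hB : ∀ k : Fin m, (fun j => c (k, j)) ∈ eigencode (F := F) (commonEig G P)
  · -- Case B: every row is in the eigencode
    obtain ⟨⟨k, j⟩, hkj⟩ : ∃ kj, c kj ≠ 0 := by
      by_contra h; push_neg at h; exact hc0 (funext h)
    refine le_trans (min_le_right _ _) ?_
    refine le_trans (sInf_le ⟨fun j' => c (k, j'), ⟨hB k, fun h => hkj (congrFun h j)⟩, rfl⟩) ?_
    simp only [Nat.cast_le, hammingNorm]
    refine Finset.card_le_card_of_injOn (fun j' => (k, j')) ?_ ?_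
    · intro j' hj'
      simp only [Finset.mem_coe, Finset.mem_filter, Finset.mem_univ, true_and] at hj' ⊢
      exact hj'
    · intro a _ b _ h; exact (Prod.mk.injEq _ _ _ _ ▸ h).2
  · -- Case A: some row is not in the eigencode
    push_neg at hB
    obtain ⟨k, hk⟩ := hB
    simp only [eigencode, Set.mem_setOf_eq, not_forall] at hk
    obtain ⟨v, hv, hvne⟩ := hk
    have hmul : ∀ β ∈ P, ∀ i, ∑ j, Polynomial.aeval β (G i j) * v j = 0 := by
      intro β hβ i
      have := congrFun (hv β hβ) i
      simpa [Matrix.mulVec, dotProduct] using this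
    set g : Fin m → E := fun k' => ∑ j, v j * algebraMap F E (c (k', j)) with hg
    have hgmem : ∀ β ∈ P, ∑ i : Fin m, g i * β ^ (i : ℕ) = 0 := by
      intro β hβ
      have key := spanEval G β v (hmul β hβ) _ hcS
      have heval : ∀ j, Polynomial.aeval β (toPolyL F m ℓ c j)
          = ∑ k' : Fin m, algebraMap F E (c (k', j)) * β ^ (k' : ℕ) := by
        intro j
        simp [toPolyL, map_sum]
      calc ∑ i : Fin m, g i * β ^ (i : ℕ)
          = ∑ i : Fin m, ∑ j, v j * algebraMap F E (c (i, j)) * β ^ (i : ℕ) := by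
            simp [hg, Finset.sum_mul]
        _ = ∑ j, (∑ i : Fin m, algebraMap F E (c (i, j)) * β ^ (i : ℕ)) * v j := by
            rw [Finset.sum_comm]
            congr 1; funext j
            rw [Finset.sum_mul]
            congr 1; funext i
            ring
        _ = ∑ j, Polynomial.aeval β (toPolyL F m ℓ c j) * v j := by
            congr 1; funext j; rw [heval]
        _ = 0 := key
    refine le_trans (min_le_left _ _) (le_trans hdP ?_)
    have hgne : g ≠ 0 := fun h => hvne (by simpa [hg] using congrFun h k)
    refine le_trans (sInf_le ⟨g, ⟨hgmem, hgne⟩, rfl⟩) ?_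
    simp only [Nat.cast_le, hammingNorm]
    have hchoice : ∀ k' : Fin m, g k' ≠ 0 → ∃ j, c (k', j) ≠ 0 := by
      intro k' hk'
      by_contra h
      push_neg at h
      exact hk' (by simp [hg, h])
    refine Finset.card_le_card_of_injOn
      (fun k' => (k', if h : ∃ j, c (k', j) ≠ 0 then h.choose else ⟨0, hℓ⟩)) ?_ ?_
    · intro k' hk'
      simp only [Finset.mem_coe, Finset.mem_filter, Finset.mem_univ, true_and] at hk' ⊢
      have h := hchoice k' hk'
      rw [dif_pos h]
      exact h.choose_spec
    · intro a _ b _ h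
      exact (Prod.mk.injEq _ _ _ _ ▸ h).1
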